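/- Let u > 1 be a real quadratic unit of norm -1 (so u ≥ (1+√5)/2). Then for every n ≥ 1, |N_{K/ℚ}(Φ_n(u))| > u^{φ(n)} · e^{-5.03933}. -/

import Mathlib

open NumberField Polynomial

private lemma geom_tail_le {q : ℝ} (h0 : 0 ≤ q) (h1 : q < 1) (n : ℕ) :
    ∑ d ∈ Finset.Icc 1 n, q ^ d ≤ q / (1 - q) := by
  have hq1 : (0:ℝ) < 1 - q := by linarith
  have h1' : ∑ d ∈ Finset.Icc 1 n, q ^ d = q * ∑ i ∈ Finset.range n, q ^ i := by
    rw [Finset.mul_sum, ← Finset.Ico_add_one_right_eq_Icc, Finset.sum_Ico_eq_sum_range]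
    simp [pow_succ, pow_add, mul_comm]
  have h2 : ∑ i ∈ Finset.range n, q ^ i ≤ 1 / (1 - q) := by
    have hqn : 0 ≤ q ^ n := pow_nonneg h0 n
    have he : ∑ i ∈ Finset.range n, q ^ i = (1 - q ^ n) / (1 - q) := by
      rw [geom_sum_eq h1.ne n, div_eq_div_iff (by linarith) (by linarith)]
      ring
    rw [he]
    gcongr
    linarith
  calc ∑ d ∈ Finset.Icc 1 n, q ^ d = q * ∑ i ∈ Finset.range n, q ^ i := h1'
    _ ≤ q * (1 / (1 - q)) := by
        apply mul_le_mul_of_nonneg_left h2 h0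
    _ = q / (1 - q) := by ring

private lemma neg_log_one_sub_le {t : ℝ} (h0 : 0 ≤ t) (h1 : t < 1) :
    -Real.log (1 - t) ≤ t + t ^ 2 + t ^ 4 / (1 - t ^ 4) := by
  have h1t : (0:ℝ) < 1 - t := by linarith
  have ht4 : t ^ 4 < 1 := pow_lt_one₀ h0 h1 (by norm_num)
  have h14 : (0:ℝ) < 1 - t ^ 4 := by linarith
  have hfact : (1 - t) * ((1 + t) * (1 + t ^ 2)) = 1 - t ^ 4 := by ring
  have hlog : Real.log (1 - t) + (Real.log (1 + t) + Real.log (1 + t ^ 2))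
      = Real.log (1 - t ^ 4) := by
    rw [← Real.log_mul (by positivity) (by positivity), ← Real.log_mul h1t.ne' (by positivity),
      hfact]
  have l1 : Real.log (1 + t) ≤ t := by
    have := Real.log_le_sub_one_of_pos (x := 1 + t) (by linarith); linarith
  have l2 : Real.log (1 + t ^ 2) ≤ t ^ 2 := by
    have := Real.log_le_sub_one_of_pos (x := 1 + t ^ 2) (by positivity); linarith
  have l3 : -Real.log (1 - t ^ 4) ≤ t ^ 4 / (1 - t ^ 4) := by
    have h := Real.log_le_sub_one_of_pos (x := (1 - t ^ 4)⁻¹) (by positivity)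
    rw [Real.log_inv] at h
    have e : (1 - t ^ 4)⁻¹ - 1 = t ^ 4 / (1 - t ^ 4) := by
      field_simp
      ring
    linarith
  linarith

private lemma sum_log_bound {r : ℝ} (h0 : 0 < r) (hr : r ≤ 31 / 50) (n : ℕ) :
    (-5 : ℝ) ≤ ∑ d ∈ Finset.Icc 1 n, 2 * Real.log (1 - r ^ d) := by
  have hr1 : r < 1 := by linarith
  have h14 : (0:ℝ) < 1 - r ^ 4 := by
    have := pow_lt_one₀ h0.le hr1 (show (4:ℕ) ≠ 0 by norm_num)
    linarith
  have key : ∀ d ∈ Finset.Icc 1 n,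
      -(2 * Real.log (1 - r ^ d)) ≤ 2 * (r ^ d + (r ^ 2) ^ d + (r ^ 4) ^ d * (1 - r ^ 4)⁻¹) := by
    intro d hd
    have hd1 : 1 ≤ d := (Finset.mem_Icc.mp hd).1
    have h0d : (0:ℝ) < r ^ d := pow_pos h0 d
    have hlt : r ^ d < 1 := pow_lt_one₀ h0.le hr1 (by omega)
    have hb := neg_log_one_sub_le h0d.le hlt
    have e2 : (r ^ d) ^ 2 = (r ^ 2) ^ d := by rw [← pow_mul, ← pow_mul, mul_comm]
    have e4 : (r ^ d) ^ 4 = (r ^ 4) ^ d := by rw [← pow_mul, ← pow_mul, mul_comm]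
    have h4d : (r ^ 4) ^ d ≤ r ^ 4 := by
      calc (r ^ 4) ^ d ≤ (r ^ 4) ^ 1 :=
            pow_le_pow_of_le_one (by positivity) (by nlinarith) hd1
        _ = r ^ 4 := pow_one _
    have h14d : (0:ℝ) < 1 - (r ^ d) ^ 4 := by
      rw [e4]; linarith
    have hdiv : (r ^ d) ^ 4 / (1 - (r ^ d) ^ 4) ≤ (r ^ 4) ^ d * (1 - r ^ 4)⁻¹ := by
      rw [← div_eq_mul_inv]
      apply div_le_div₀ (by positivity) (le_of_eq e4) h14 (by rw [e4] at *; linarith)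
    rw [e2] at hb
    linarith
  have hsum := Finset.sum_le_sum key
  rw [Finset.sum_neg_distrib] at hsum
  have S1 := geom_tail_le h0.le hr1 n
  have S2 := geom_tail_le (q := r ^ 2) (by positivity) (by nlinarith) n
  have S4 := geom_tail_le (q := r ^ 4) (by positivity) (by nlinarith) n
  have hsplit : ∑ d ∈ Finset.Icc 1 n, 2 * (r ^ d + (r ^ 2) ^ d + (r ^ 4) ^ d * (1 - r ^ 4)⁻¹)
      = 2 * ((∑ d ∈ Finset.Icc 1 n, r ^ d) + (∑ d ∈ Finset.Icc 1 n, (r ^ 2) ^ d)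
        + (∑ d ∈ Finset.Icc 1 n, (r ^ 4) ^ d) * (1 - r ^ 4)⁻¹) := by
    rw [← Finset.mul_sum, Finset.sum_add_distrib, Finset.sum_add_distrib, ← Finset.sum_mul]
  -- numeric bounds
  have n1 : r / (1 - r) ≤ 31 / 19 := by
    rw [div_le_iff₀ (by linarith)]; nlinarith
  have n2 : r ^ 2 / (1 - r ^ 2) ≤ 961 / 1539 := by
    have h2 : r ^ 2 ≤ 961 / 2500 := by nlinarith
    rw [div_le_iff₀ (by nlinarith)]; nlinarith
  have n4 : r ^ 4 / (1 - r ^ 4) * (1 - r ^ 4)⁻¹ ≤ 21 / 100 := by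
    have h2 : r ^ 2 ≤ 961 / 2500 := by nlinarith
    have h4 : r ^ 4 ≤ 923521 / 6250000 := by
      nlinarith [mul_le_mul h2 h2 (by positivity : (0:ℝ) ≤ r ^ 2) (by norm_num : (0:ℝ) ≤ 961 / 2500)]
    have he : r ^ 4 / (1 - r ^ 4) * (1 - r ^ 4)⁻¹ = r ^ 4 / (1 - r ^ 4) ^ 2 := by
      rw [← div_eq_mul_inv, div_div, ← sq]
    rw [he, div_le_iff₀ (by positivity)]
    nlinarith [sq_nonneg (r ^ 4)]
  have hK : (0:ℝ) ≤ (1 - r ^ 4)⁻¹ := by positivity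
  have hgeom : (∑ d ∈ Finset.Icc 1 n, r ^ d) + (∑ d ∈ Finset.Icc 1 n, (r ^ 2) ^ d)
      + (∑ d ∈ Finset.Icc 1 n, (r ^ 4) ^ d) * (1 - r ^ 4)⁻¹
      ≤ 31 / 19 + 961 / 1539 + 21 / 100 := by
    have t4 : (∑ d ∈ Finset.Icc 1 n, (r ^ 4) ^ d) * (1 - r ^ 4)⁻¹
        ≤ r ^ 4 / (1 - r ^ 4) * (1 - r ^ 4)⁻¹ := mul_le_mul_of_nonneg_right S4 hK
    have := n1; have := n2; have := n4
    linarith [S1, S2]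
  rw [hsplit] at hsum
  linarith [hgeom]

private lemma key_real {a : ℝ} (ha : 50 / 31 ≤ a) {n : ℕ} (hn : 0 < n) :
    |(cyclotomic n ℝ).eval a * (cyclotomic n ℝ).eval (-a⁻¹)| >
      a ^ n.totient * Real.exp (-5.03933) := by
  have ha1 : (1:ℝ) < a := by linarith
  have ha0 : (0:ℝ) < a := by linarith
  set r : ℝ := a⁻¹ with hr_def
  have hr0 : 0 < r := by positivity
  have hr1 : r < 1 := inv_lt_one_of_one_lt₀ ha1
  have hr62 : r ≤ 31 / 50 := by
    rw [hr_def]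
    rw [show (31:ℝ)/50 = (50/31)⁻¹ by norm_num]
    exact inv_anti₀ (by norm_num) ha
  have hra : r * a = 1 := inv_mul_cancel₀ ha0.ne'
  -- evaluation of the product of cyclotomics
  have hprod_eval : ∀ (x : ℝ) (m : ℕ), 0 < m →
      ∏ d ∈ m.divisors, (cyclotomic d ℝ).eval x = x ^ m - 1 := by
    intro x m hm
    rw [← Polynomial.eval_prod, Polynomial.prod_cyclotomic_eq_X_pow_sub_one hm ℝ]
    simp
  have hxa : ∀ m : ℕ, 0 < m → a ^ m - 1 ≠ 0 := by
    intro m hm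
    have : 1 < a ^ m := one_lt_pow₀ ha1 (by omega)
    linarith
  have hxb : ∀ m : ℕ, 0 < m → (-r) ^ m - 1 ≠ 0 := by
    intro m hm
    have h1 : |(-r) ^ m| < 1 := by
      rw [abs_pow, abs_neg, abs_of_pos hr0]
      exact pow_lt_one₀ hr0.le hr1 (by omega)
    intro h
    rw [sub_eq_zero] at h
    rw [h] at h1
    norm_num at h1
  have hfactor : ∀ m : ℕ, 0 < m → ∀ d ∈ m.divisors,
      (cyclotomic d ℝ).eval a ≠ 0 ∧ (cyclotomic d ℝ).eval (-r) ≠ 0 := by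
    intro m hm d hd
    constructor
    · intro h
      exact hxa m hm (by rw [← hprod_eval a m hm]; exact Finset.prod_eq_zero hd h)
    · intro h
      exact hxb m hm (by rw [← hprod_eval (-r) m hm]; exact Finset.prod_eq_zero hd h)
  set f : ℕ → ℝ := fun d =>
    Real.log ((cyclotomic d ℝ).eval a * (cyclotomic d ℝ).eval (-r))
      - (d.totient : ℝ) * Real.log a with hf_def
  set g : ℕ → ℝ := fun m =>
    Real.log ((a ^ m - 1) * ((-r) ^ m - 1)) - (m : ℝ) * Real.log a with hg_def
  have stepA : ∀ m : ℕ, 0 < m → ∑ d ∈ m.divisors, f d = g m := by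
    intro m hm
    have h1 : ∑ d ∈ m.divisors, Real.log ((cyclotomic d ℝ).eval a * (cyclotomic d ℝ).eval (-r))
        = Real.log ((a ^ m - 1) * ((-r) ^ m - 1)) := by
      rw [← Real.log_prod
        (fun d hd => mul_ne_zero (hfactor m hm d hd).1 (hfactor m hm d hd).2)]
      rw [Finset.prod_mul_distrib, hprod_eval a m hm, hprod_eval (-r) m hm]
    have h2 : ∑ d ∈ m.divisors, (d.totient : ℝ) = (m : ℝ) := by
      rw [← Nat.cast_sum]
      norm_cast
      exact Nat.sum_totient m
    simp only [hf_def, hg_def]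
    rw [Finset.sum_sub_distrib, h1, ← Finset.sum_mul, h2]
  have stepB := ArithmeticFunction.sum_eq_iff_sum_smul_moebius_eq.mp stepA n hn
  -- bounds on g
  have hg_bounds : ∀ m : ℕ, 0 < m → 2 * Real.log (1 - r ^ m) ≤ g m ∧ g m ≤ 0 := by
    intro m hm
    have hrm1 : r ^ m < 1 := pow_lt_one₀ hr0.le hr1 (by omega)
    have hrm0 : (0:ℝ) < r ^ m := pow_pos hr0 m
    have hbm : |(-r) ^ m| = r ^ m := by rw [abs_pow, abs_neg, abs_of_pos hr0]
    have hbm_le : (-r) ^ m ≤ r ^ m := le_of_abs_le hbm.le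
    have hbm_ge : -(r ^ m) ≤ (-r) ^ m := neg_le_of_abs_le hbm.le
    have ham : 1 < a ^ m := one_lt_pow₀ ha1 (by omega)
    have hbm1 : (0:ℝ) < 1 - (-r) ^ m := by linarith
    have hkey : g m = Real.log (1 - r ^ m) + Real.log (1 - (-r) ^ m) := by
      simp only [hg_def]
      have e0 : Real.log ((-r) ^ m - 1) = Real.log (1 - (-r) ^ m) := by
        rw [show (-r) ^ m - 1 = -(1 - (-r) ^ m) by ring, Real.log_neg_eq_log]
      have e1 : Real.log ((a ^ m - 1) * ((-r) ^ m - 1))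
          = Real.log (a ^ m - 1) + Real.log (1 - (-r) ^ m) := by
        rw [Real.log_mul (hxa m hm) (hxb m hm), e0]
      have erm : r ^ m = (a ^ m)⁻¹ := by rw [hr_def, inv_pow]
      have e2 : Real.log (a ^ m - 1) - (m : ℝ) * Real.log a = Real.log (1 - r ^ m) := by
        rw [← Real.log_pow, ← Real.log_div (hxa m hm) (by positivity)]
        congr 1
        rw [erm]
        field_simp
      rw [e1]
      linarith [e2]
    constructor
    · have hmono : Real.log (1 - r ^ m) ≤ Real.log (1 - (-r) ^ m) :=
        Real.log_le_log (by linarith) (by linarith)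
      linarith [hkey]
    · have hprodle : (1 - r ^ m) * (1 - (-r) ^ m) ≤ 1 := by nlinarith
      have hprodpos : (0:ℝ) < (1 - r ^ m) * (1 - (-r) ^ m) := mul_pos (by linarith) hbm1
      have := Real.log_nonpos hprodpos.le hprodle
      rw [Real.log_mul (by linarith) (by linarith)] at this
      linarith [hkey]
  -- bound each Möbius term
  have hterm : ∀ x ∈ n.divisorsAntidiagonal,
      (2:ℝ) * Real.log (1 - r ^ x.2) ≤ (ArithmeticFunction.moebius x.1 : ℤ) • g x.2 := by
    intro x hx
    have hx2 : 0 < x.2 := Nat.pos_of_mem_divisors (Nat.snd_mem_divisors_of_mem_antidiagonal hx)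
    obtain ⟨hgl, hgu⟩ := hg_bounds x.2 hx2
    have hmu : ((ArithmeticFunction.moebius x.1 : ℤ) : ℝ) ≤ 1 := by
      have h := ArithmeticFunction.abs_moebius_le_one (n := x.1)
      have : (ArithmeticFunction.moebius x.1 : ℤ) ≤ 1 := le_of_abs_le h
      exact_mod_cast this
    rw [zsmul_eq_mul]
    calc (2:ℝ) * Real.log (1 - r ^ x.2) ≤ g x.2 := hgl
      _ = 1 * g x.2 := (one_mul _).symm
      _ ≤ ((ArithmeticFunction.moebius x.1 : ℤ) : ℝ) * g x.2 :=
          mul_le_mul_of_nonpos_right hmu hgu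
  have hsum1 : ∑ x ∈ n.divisorsAntidiagonal, (2:ℝ) * Real.log (1 - r ^ x.2) ≤ f n := by
    rw [← stepB]
    exact Finset.sum_le_sum hterm
  have hre : ∑ x ∈ n.divisorsAntidiagonal, (2:ℝ) * Real.log (1 - r ^ x.2)
      = ∑ d ∈ n.divisors, 2 * Real.log (1 - r ^ d) :=
    Nat.sum_divisorsAntidiagonal' (f := fun _ j => (2:ℝ) * Real.log (1 - r ^ j))
  have hnonpos : ∀ d : ℕ, 2 * Real.log (1 - r ^ d) ≤ 0 := by
    intro d
    have h0 : (0:ℝ) ≤ 1 - r ^ d := by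
      have : r ^ d ≤ 1 := pow_le_one₀ hr0.le hr1.le
      linarith
    have := Real.log_nonpos h0 (by nlinarith [pow_pos hr0 d])
    linarith
  have hsubset : ∑ d ∈ Finset.Icc 1 n, (2:ℝ) * Real.log (1 - r ^ d)
      ≤ ∑ d ∈ n.divisors, 2 * Real.log (1 - r ^ d) := by
    have hsub : n.divisors ⊆ Finset.Icc 1 n := by
      intro d hd
      exact Finset.mem_Icc.mpr ⟨Nat.pos_of_mem_divisors hd, Nat.divisor_le hd⟩
    have h := Finset.sum_le_sum_of_subset_of_nonneg (f := fun d => -(2 * Real.log (1 - r ^ d)))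
      hsub (fun i _ _ => by
        show (0:ℝ) ≤ -(2 * Real.log (1 - r ^ i))
        linarith [hnonpos i])
    simp only [Finset.sum_neg_distrib] at h
    linarith
  have hfn : (-5 : ℝ) ≤ f n := by
    rw [hre] at hsum1
    have := sum_log_bound hr0 hr62 n
    linarith [hsum1, hsubset]
  -- conclude
  have hPne : (cyclotomic n ℝ).eval a * (cyclotomic n ℝ).eval (-r) ≠ 0 :=
    mul_ne_zero (hfactor n hn n (Nat.mem_divisors_self n hn.ne')).1
      (hfactor n hn n (Nat.mem_divisors_self n hn.ne')).2
  have habs : 0 < |(cyclotomic n ℝ).eval a * (cyclotomic n ℝ).eval (-r)| := abs_pos.mpr hPne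
  have hloggt : (n.totient : ℝ) * Real.log a + (-5.03933)
      < Real.log |(cyclotomic n ℝ).eval a * (cyclotomic n ℝ).eval (-r)| := by
    rw [Real.log_abs]
    have hf : f n = Real.log ((cyclotomic n ℝ).eval a * (cyclotomic n ℝ).eval (-r))
        - (n.totient : ℝ) * Real.log a := rfl
    norm_num
    linarith [hfn]
  have hrhs : a ^ n.totient * Real.exp (-5.03933)
      = Real.exp ((n.totient : ℝ) * Real.log a + (-5.03933)) := by
    rw [Real.exp_add, Real.exp_nat_mul, Real.exp_log ha0]
  rw [hr_def] at habs hloggt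
  rw [hrhs]
  calc Real.exp ((n.totient : ℝ) * Real.log a + (-5.03933))
      < Real.exp (Real.log |(cyclotomic n ℝ).eval a * (cyclotomic n ℝ).eval (-a⁻¹)|) :=
        Real.exp_lt_exp.mpr hloggt
    _ = |(cyclotomic n ℝ).eval a * (cyclotomic n ℝ).eval (-a⁻¹)| := Real.exp_log habs

/-- For a real quadratic unit `u > 1` of norm `-1`, for every `n ≥ 1`,
`|N(Φ_n(u))| > u^{φ(n)} · e^{-5.03933}`. -/
theorem norm_cyclotomic_lower_bound_neg_one (K : Type*) [Field K] [NumberField K]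
    (hdeg : Module.finrank ℚ K = 2) (σ : K →+* ℝ)
    (u : (RingOfIntegers K)ˣ) (hu : 1 < σ (((u : RingOfIntegers K) : K)))
    (hnorm : Algebra.norm ℤ ((u : RingOfIntegers K)) = -1)
    (n : ℕ) (hn : 1 ≤ n) :
    ((|Algebra.norm ℤ (aeval (u : RingOfIntegers K) (cyclotomic n ℤ))| : ℤ) : ℝ) >
      (σ (((u : RingOfIntegers K) : K))) ^ n.totient * Real.exp (-5.03933) := by
  classical
  set a : ℝ := σ (((u : RingOfIntegers K) : K)) with ha_def
  have ha1 : (1:ℝ) < a := hu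
  have ha0 : (0:ℝ) < a := by linarith
  -- the two embeddings of K into ℂ
  let ψ : K →+* ℂ := Complex.ofRealHom.comp σ
  let τ₁ : K →ₐ[ℚ] ℂ := RingHom.equivRatAlgHom K ℂ ψ
  have hτ₁ : ∀ x : K, τ₁ x = ((σ x : ℝ) : ℂ) := fun x => rfl
  have hcard : Fintype.card (K →ₐ[ℚ] ℂ) = 2 := by rw [AlgHom.card]; exact hdeg
  obtain ⟨τ₂, hτ₂ne⟩ := Fintype.exists_ne_of_one_lt_card (by omega) τ₁
  have hne' : τ₁ ≠ τ₂ := hτ₂ne.symm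
  have huniv : (Finset.univ : Finset (K →ₐ[ℚ] ℂ)) = {τ₁, τ₂} := by
    symm
    apply Finset.eq_univ_of_card
    rw [Finset.card_insert_of_notMem (by simpa using hne'), Finset.card_singleton, hcard]
  have hprodQ : ∀ x : K, ((Algebra.norm ℚ x : ℚ) : ℂ) = τ₁ x * τ₂ x := by
    intro x
    have h := Algebra.norm_eq_prod_embeddings ℚ ℂ x
    rw [huniv, Finset.prod_insert (by simpa using hne'), Finset.prod_singleton] at h
    rw [← h, eq_ratCast (algebraMap ℚ ℂ)]
  have hnormZ : ∀ x : RingOfIntegers K,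
      ((Algebra.norm ℤ x : ℤ) : ℂ) = τ₁ (x : K) * τ₂ (x : K) := by
    intro x
    rw [← hprodQ]
    rw [← Algebra.coe_norm_int x]
    push_cast
    ring
  -- τ₂ u = -a⁻¹
  have hane : (a : ℂ) ≠ 0 := by exact_mod_cast ha0.ne'
  have hτ₁u : τ₁ ((u : RingOfIntegers K) : K) = ((a : ℝ) : ℂ) := hτ₁ _
  have hτ₂u : τ₂ ((u : RingOfIntegers K) : K) = ((-a⁻¹ : ℝ) : ℂ) := by
    have h := hnormZ (u : RingOfIntegers K)
    rw [hnorm, hτ₁u] at h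
    have h' : ((-1 : ℤ) : ℂ) = -1 := by norm_num
    rw [h'] at h
    apply mul_left_cancel₀ hane
    rw [← h]
    push_cast
    field_simp
  -- the inverse unit
  set w : RingOfIntegers K := ((u⁻¹ : (RingOfIntegers K)ˣ) : RingOfIntegers K) with hw_def
  have hmulO : (u : RingOfIntegers K) * w = 1 := u.mul_inv
  have hmulK : ((u : RingOfIntegers K) : K) * (w : K) = 1 := by
    have h := congrArg (algebraMap (RingOfIntegers K) K) hmulO
    rw [map_mul, map_one] at h
    exact h
  have hτ₁w : τ₁ (w : K) = ((a⁻¹ : ℝ) : ℂ) := by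
    have h := congrArg τ₁ hmulK
    rw [map_mul, map_one, hτ₁u] at h
    have : τ₁ (w : K) = ((a : ℝ) : ℂ)⁻¹ := by
      field_simp at h ⊢
      linear_combination h
    rw [this]
    push_cast
    ring
  have hτ₂w : τ₂ (w : K) = ((-a : ℝ) : ℂ) := by
    have h := congrArg τ₂ hmulK
    rw [map_mul, map_one, hτ₂u] at h
    have hne2 : ((-a⁻¹ : ℝ) : ℂ) ≠ 0 := by
      push_cast
      simp only [ne_eq, neg_eq_zero, inv_eq_zero]
      exact_mod_cast ha0.ne'
    apply mul_left_cancel₀ hne2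
    rw [h]
    push_cast
    field_simp
  -- lower bound a ≥ 50/31 via the norm of u + u⁻¹
  have ha50 : (50 / 31 : ℝ) ≤ a := by
    set v : RingOfIntegers K := (u : RingOfIntegers K) + w with hv_def
    have hvc : ((v : RingOfIntegers K) : K) = ((u : RingOfIntegers K) : K) + (w : K) := by
      rw [hv_def]; exact map_add (algebraMap (RingOfIntegers K) K) _ _
    have hv := hnormZ v
    rw [hvc] at hv
    simp only [map_add] at hv
    rw [hτ₁u, hτ₂u, hτ₁w, hτ₂w] at hv
    have hv' : ((Algebra.norm ℤ v : ℤ) : ℂ) = (((a + a⁻¹) * (-a⁻¹ + -a) : ℝ) : ℂ) := by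
      rw [hv]; push_cast; ring
    have hvR : ((Algebra.norm ℤ v : ℤ) : ℝ) = (a + a⁻¹) * (-a⁻¹ + -a) := by
      exact_mod_cast hv'
    have hinv : a * a⁻¹ = 1 := mul_inv_cancel₀ ha0.ne'
    have hgt2 : 2 < a + a⁻¹ := by nlinarith [sq_nonneg (a - 1)]
    have hlt4 : ((Algebra.norm ℤ v : ℤ) : ℝ) < -4 := by
      rw [hvR]; nlinarith
    have hZ : (Algebra.norm ℤ v : ℤ) ≤ -5 := by
      have : (Algebra.norm ℤ v : ℤ) < -4 := by exact_mod_cast hlt4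
      omega
    have h5 : 5 ≤ (a + a⁻¹) ^ 2 := by
      have : ((Algebra.norm ℤ v : ℤ) : ℝ) ≤ -5 := by exact_mod_cast hZ
      nlinarith [hvR]
    have hia : 0 < a⁻¹ := by positivity
    nlinarith [sq_nonneg (a + a⁻¹), mul_pos (mul_pos ha0 ha0) ha0,
      mul_pos ha0 ha0, sq_nonneg (a * a - 1), sq_nonneg (a * a - 5/2)]
  -- express the norm as a product of real cyclotomic values
  set N : ℤ := Algebra.norm ℤ (aeval (u : RingOfIntegers K) (cyclotomic n ℤ)) with hN_def
  have heval1 : aeval (u : RingOfIntegers K) (cyclotomic n ℤ)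
      = (cyclotomic n (RingOfIntegers K)).eval (u : RingOfIntegers K) := by
    rw [aeval_def, eval₂_eq_eval_map, map_cyclotomic]
  have hNc : ((N : ℤ) : ℂ)
      = (((cyclotomic n ℝ).eval a : ℝ) : ℂ) * (((cyclotomic n ℝ).eval (-a⁻¹) : ℝ) : ℂ) := by
    rw [hN_def, hnormZ, heval1]
    have hcoe : ((((cyclotomic n (RingOfIntegers K)).eval (u : RingOfIntegers K)
        : RingOfIntegers K)) : K)
        = (cyclotomic n K).eval ((u : RingOfIntegers K) : K) := by
      rw [RingOfIntegers.coe_eq_algebraMap,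
        ← cyclotomic.eval_apply (u : RingOfIntegers K) n (algebraMap (RingOfIntegers K) K)]
    rw [hcoe]
    have hτeval : ∀ (τ : K →ₐ[ℚ] ℂ) (x : K),
        τ ((cyclotomic n K).eval x) = (cyclotomic n ℂ).eval (τ x) := by
      intro τ x
      exact (cyclotomic.eval_apply x n (τ : K →+* ℂ)).symm
    rw [hτeval τ₁, hτeval τ₂, hτ₁u, hτ₂u]
    have hreval : ∀ y : ℝ, (cyclotomic n ℂ).eval ((y : ℝ) : ℂ)
        = (((cyclotomic n ℝ).eval y : ℝ) : ℂ) := by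
      intro y
      exact cyclotomic.eval_apply y n Complex.ofRealHom
    rw [hreval a, hreval (-a⁻¹)]
  have hNR : ((N : ℤ) : ℝ) = (cyclotomic n ℝ).eval a * (cyclotomic n ℝ).eval (-a⁻¹) := by
    have : ((N : ℤ) : ℂ) = ((((cyclotomic n ℝ).eval a * (cyclotomic n ℝ).eval (-a⁻¹) : ℝ)) : ℂ) := by
      rw [hNc]; push_cast; ring
    exact_mod_cast this
  have habs : ((|N| : ℤ) : ℝ) = |(cyclotomic n ℝ).eval a * (cyclotomic n ℝ).eval (-a⁻¹)| := by
    rw [Int.cast_abs, hNR]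
  rw [habs]
  exact key_real ha50 hn
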